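/- Under a completely randomized assignment, for any real coefficients c_1,…,c_J, the variance of the linear combination Σ_{j=1}^J c_j p_j equals Σ_{j=1}^J c_j² ((N − N_j)/N)(S_j²/N_j) − (1/N) Σ_{1 ≤ j < j' ≤ J} c_j c_{j'} (S_j² + S_{j'}² − S²_{j−j'}). -/
import Mathlib


open Finset

/-- The finset of completely randomized assignments of `N` units to treatments in `J`
with group sizes `Nj`. -/
def assignments (N : ℕ) {J : Type*} [Fintype J] [DecidableEq J] (Nj : J → ℕ) :
    Finset (Fin N → J) :=
  Finset.univ.filter fun T => ∀ j, (Finset.univ.filter fun i => T i = j).card = Nj j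

/-- Expectation with respect to the uniform distribution on completely randomized
assignments. -/
noncomputable def expect {N : ℕ} {J : Type*} [Fintype J] [DecidableEq J]
    (Nj : J → ℕ) (f : (Fin N → J) → ℝ) : ℝ :=
  (∑ T ∈ assignments N Nj, f T) / ((assignments N Nj).card : ℝ)

/-- Variance with respect to the randomization distribution. -/
noncomputable def rvar {N : ℕ} {J : Type*} [Fintype J] [DecidableEq J]
    (Nj : J → ℕ) (f : (Fin N → J) → ℝ) : ℝ :=
  expect Nj fun T => (f T - expect Nj f) ^ 2

/-- Covariance with respect to the randomization distribution. -/
noncomputable def rcov {N : ℕ} {J : Type*} [Fintype J] [DecidableEq J]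
    (Nj : J → ℕ) (f g : (Fin N → J) → ℝ) : ℝ :=
  expect Nj fun T => (f T - expect Nj f) * (g T - expect Nj g)

/-- Observed group mean `p_j` of treatment `j` under assignment `T`. -/
noncomputable def pObs {N : ℕ} {J : Type*} [DecidableEq J]
    (Y : Fin N → J → ℝ) (Nj : J → ℕ) (j : J) (T : Fin N → J) : ℝ :=
  (∑ i ∈ Finset.univ.filter fun i => T i = j, Y i j) / (Nj j : ℝ)

/-- Population mean `P_j`. -/
noncomputable def Pmean {N : ℕ} {J : Type*} (Y : Fin N → J → ℝ) (j : J) : ℝ :=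
  (∑ i, Y i j) / (N : ℝ)

/-- Population variance `S_j²`. -/
noncomputable def S2 {N : ℕ} {J : Type*} (Y : Fin N → J → ℝ) (j : J) : ℝ :=
  (∑ i, (Y i j - Pmean Y j) ^ 2) / ((N : ℝ) - 1)

/-- Variance of unit-level differences `S²_{j-j'}`. -/
noncomputable def S2diff {N : ℕ} {J : Type*} (Y : Fin N → J → ℝ) (j j' : J) : ℝ :=
  (∑ i, (Y i j - Y i j' - (Pmean Y j - Pmean Y j')) ^ 2) / ((N : ℝ) - 1)


section Aux

variable {N J : ℕ}

lemma mem_assignments {Nj : Fin J → ℕ} {T : Fin N → Fin J} :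
    T ∈ assignments N Nj ↔ ∀ j, (Finset.univ.filter fun i => T i = j).card = Nj j := by
  simp [assignments]

lemma card_filter_comp_perm (σ : Equiv.Perm (Fin N)) (p : Fin N → Prop) [DecidablePred p] :
    (Finset.univ.filter fun i => p (σ i)).card = (Finset.univ.filter p).card := by
  apply Finset.card_bij (fun i _ => σ i)
  · intro a ha; simp at ha ⊢; exact ha
  · intro a ha b hb h; exact σ.injective h
  · intro b hb; exact ⟨σ.symm b, by simpa using hb, by simp⟩

lemma comp_perm_mem {Nj : Fin J → ℕ} {T : Fin N → Fin J} (σ : Equiv.Perm (Fin N))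
    (hT : T ∈ assignments N Nj) : (T ∘ σ) ∈ assignments N Nj := by
  rw [mem_assignments] at hT ⊢
  intro j
  simpa using (card_filter_comp_perm σ (fun i => T i = j)).trans (hT j)

lemma sum_comp_perm {Nj : Fin J → ℕ} (σ : Equiv.Perm (Fin N)) (f : (Fin N → Fin J) → ℝ) :
    ∑ T ∈ assignments N Nj, f (T ∘ σ) = ∑ T ∈ assignments N Nj, f T := by
  apply Finset.sum_nbij' (fun T => T ∘ σ) (fun T => T ∘ σ.symm)
  · intro T hT; exact comp_perm_mem σ hT
  · intro T hT; exact comp_perm_mem σ.symm hT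
  · intro T hT; funext i; simp
  · intro T hT; funext i; simp
  · intro T hT; rfl

lemma exists_perm_two {i i' k k' : Fin N} (h : i ≠ i') (h2 : k ≠ k') :
    ∃ σ : Equiv.Perm (Fin N), σ i = k ∧ σ i' = k' := by
  set τ := Equiv.swap i k with hτ
  set m := τ i' with hm
  have hmk : k ≠ m := by
    intro hc
    exact h (τ.injective ((Equiv.swap_apply_left i k).trans hc))
  refine ⟨τ.trans (Equiv.swap m k'), ?_, ?_⟩
  · have : τ i = k := Equiv.swap_apply_left i k
    simp only [Equiv.trans_apply, this]
    exact Equiv.swap_apply_of_ne_of_ne hmk h2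
  · simp only [Equiv.trans_apply, ← hm]
    exact Equiv.swap_apply_left m k'

lemma assignments_nonempty (Nj : Fin J → ℕ) (hsum : ∑ j, Nj j = N) :
    (assignments N Nj).Nonempty := by
  have hcard : Fintype.card (Σ j : Fin J, Fin (Nj j)) = Fintype.card (Fin N) := by
    simp [hsum]
  let e : (Σ j : Fin J, Fin (Nj j)) ≃ Fin N := Fintype.equivOfCardEq hcard
  refine ⟨fun i => (e.symm i).1, ?_⟩
  rw [mem_assignments]
  intro j
  have h1 : (Finset.univ.filter fun i => (e.symm i).1 = j).card
      = (Finset.univ.filter fun s : (Σ j : Fin J, Fin (Nj j)) => s.1 = j).card := by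
    apply Finset.card_bij (fun i _ => e.symm i)
    · intro a ha; simp at ha ⊢; exact ha
    · intro a _ b _ hab; exact e.symm.injective hab
    · intro b hb; exact ⟨e b, by simpa using hb, by simp⟩
  rw [h1]
  rw [Finset.card_filter]
  rw [← Finset.univ_sigma_univ, Finset.sum_sigma]
  simp [apply_ite Finset.card, Finset.sum_ite_eq']


lemma sum_boole_card {T : Fin N → Fin J} (j : Fin J) :
    (∑ i, if T i = j then (1:ℝ) else 0) = ((Finset.univ.filter fun i => T i = j).card : ℝ) := by
  rw [Finset.card_filter]; push_cast; rfl

lemma sum_ind (Nj : Fin J → ℕ) (i : Fin N) (j : Fin J) :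
    (N:ℝ) * ∑ T ∈ assignments N Nj, (if T i = j then (1:ℝ) else 0)
      = ((assignments N Nj).card : ℝ) * (Nj j : ℝ) := by
  have hconst : ∀ k : Fin N,
      (∑ T ∈ assignments N Nj, (if T k = j then (1:ℝ) else 0))
        = ∑ T ∈ assignments N Nj, (if T i = j then (1:ℝ) else 0) := by
    intro k
    have := sum_comp_perm (Nj := Nj) (Equiv.swap i k)
      (fun T => if T i = j then (1:ℝ) else 0)
    simpa [Function.comp, Equiv.swap_apply_left] using this
  have h1 : ∑ k : Fin N, (∑ T ∈ assignments N Nj, (if T k = j then (1:ℝ) else 0))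
      = (N:ℝ) * ∑ T ∈ assignments N Nj, (if T i = j then (1:ℝ) else 0) := by
    rw [Finset.sum_congr rfl (fun k _ => hconst k), Finset.sum_const, Finset.card_univ,
      Fintype.card_fin, nsmul_eq_mul]
  have hinner : ∀ T ∈ assignments N Nj,
      (∑ k, if T k = j then (1:ℝ) else 0) = (Nj j : ℝ) := fun T hT => by
    rw [sum_boole_card, (mem_assignments.mp hT) j]
  rw [← h1, Finset.sum_comm, Finset.sum_congr rfl hinner, Finset.sum_const, nsmul_eq_mul]

lemma sum_ind_pair (Nj : Fin J → ℕ) {i i' : Fin N} (hii : i ≠ i') (j j' : Fin J) :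
    (N:ℝ) * ((N:ℝ) - 1) * ∑ T ∈ assignments N Nj,
        ((if T i = j then (1:ℝ) else 0) * (if T i' = j' then (1:ℝ) else 0))
      = ((assignments N Nj).card : ℝ)
          * ((Nj j : ℝ) * (Nj j' : ℝ) - if j = j' then (Nj j : ℝ) else 0) := by
  have hconst : ∀ k k' : Fin N, k ≠ k' →
      (∑ T ∈ assignments N Nj, ((if T k = j then (1:ℝ) else 0) * (if T k' = j' then (1:ℝ) else 0)))
        = ∑ T ∈ assignments N Nj,
            ((if T i = j then (1:ℝ) else 0) * (if T i' = j' then (1:ℝ) else 0)) := by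
    intro k k' hkk
    obtain ⟨σ, h1, h2⟩ := exists_perm_two hii hkk
    have := sum_comp_perm (Nj := Nj) σ
      (fun T => (if T i = j then (1:ℝ) else 0) * (if T i' = j' then (1:ℝ) else 0))
    simpa [Function.comp, h1, h2] using this
  have hN1 : 1 ≤ N := Nat.pos_of_ne_zero (fun h => (h ▸ i).elim0)
  have hL : ∑ k : Fin N, ∑ k' ∈ Finset.univ.erase k,
      (∑ T ∈ assignments N Nj, ((if T k = j then (1:ℝ) else 0) * (if T k' = j' then (1:ℝ) else 0)))
      = (N:ℝ) * ((N:ℝ) - 1) * ∑ T ∈ assignments N Nj,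
          ((if T i = j then (1:ℝ) else 0) * (if T i' = j' then (1:ℝ) else 0)) := by
    have : ∀ k : Fin N, ∑ k' ∈ Finset.univ.erase k,
        (∑ T ∈ assignments N Nj, ((if T k = j then (1:ℝ) else 0) * (if T k' = j' then (1:ℝ) else 0)))
        = ((N:ℝ) - 1) * ∑ T ∈ assignments N Nj,
            ((if T i = j then (1:ℝ) else 0) * (if T i' = j' then (1:ℝ) else 0)) := by
      intro k
      rw [Finset.sum_congr rfl (fun k' hk' => hconst k k' (Finset.ne_of_mem_erase hk').symm)]
      rw [Finset.sum_const, Finset.card_erase_of_mem (Finset.mem_univ k), Finset.card_univ]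
      rw [nsmul_eq_mul, Fintype.card_fin, Nat.cast_sub hN1, Nat.cast_one]
    rw [Finset.sum_congr rfl (fun k _ => this k), Finset.sum_const, Finset.card_univ,
      nsmul_eq_mul, Fintype.card_fin]
    ring
  rw [← hL]
  have hswap : ∑ k : Fin N, ∑ k' ∈ Finset.univ.erase k,
      (∑ T ∈ assignments N Nj, ((if T k = j then (1:ℝ) else 0) * (if T k' = j' then (1:ℝ) else 0)))
      = ∑ T ∈ assignments N Nj, ∑ k : Fin N, ∑ k' ∈ Finset.univ.erase k,
          ((if T k = j then (1:ℝ) else 0) * (if T k' = j' then (1:ℝ) else 0)) := by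
    rw [Finset.sum_comm]
    exact Finset.sum_congr rfl (fun T _ => Finset.sum_comm)
  rw [hswap]
  have hper : ∀ T ∈ assignments N Nj, ∑ k : Fin N, ∑ k' ∈ Finset.univ.erase k,
      ((if T k = j then (1:ℝ) else 0) * (if T k' = j' then (1:ℝ) else 0))
      = (Nj j : ℝ) * (Nj j' : ℝ) - if j = j' then (Nj j : ℝ) else 0 := by
    intro T hT
    have hmem := mem_assignments.mp hT
    have herase : ∀ k : Fin N, ∑ k' ∈ Finset.univ.erase k,
        ((if T k = j then (1:ℝ) else 0) * (if T k' = j' then (1:ℝ) else 0))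
        = (if T k = j then (1:ℝ) else 0) * ((Nj j' : ℝ) - (if T k = j' then (1:ℝ) else 0)) := by
      intro k
      rw [← Finset.mul_sum, Finset.sum_erase_eq_sub (Finset.mem_univ k), sum_boole_card, hmem j']
    rw [Finset.sum_congr rfl (fun k _ => herase k)]
    have hexpand : ∀ k : Fin N,
        (if T k = j then (1:ℝ) else 0) * ((Nj j' : ℝ) - (if T k = j' then (1:ℝ) else 0))
        = (Nj j' : ℝ) * (if T k = j then (1:ℝ) else 0)
            - (if j = j' then (if T k = j then (1:ℝ) else 0) else 0) := by
      intro k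
      by_cases h1 : T k = j
      · by_cases hjj : j = j'
        · subst hjj; simp [h1]
        · have h2 : ¬ T k = j' := fun hc => hjj (h1 ▸ hc ▸ rfl)
          simp [h1, h2, hjj]
      · simp [h1]
    rw [Finset.sum_congr rfl (fun k _ => hexpand k), Finset.sum_sub_distrib, ← Finset.mul_sum,
      sum_boole_card, hmem j]
    by_cases hjj : j = j'
    · simp only [if_pos hjj, sum_boole_card, hmem j]; ring
    · simp only [if_neg hjj, Finset.sum_const_zero]; ring
  rw [Finset.sum_congr rfl hper, Finset.sum_const, nsmul_eq_mul]



lemma card_ne {Nj : Fin J → ℕ} (hsum : ∑ j, Nj j = N) :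
    ((assignments N Nj).card : ℝ) ≠ 0 := by
  have := (assignments_nonempty Nj hsum).card_pos
  exact_mod_cast this.ne'

lemma pObs_eq {Y : Fin N → Fin J → ℝ} {Nj : Fin J → ℕ} (j : Fin J) (T : Fin N → Fin J) :
    pObs Y Nj j T = (∑ i, (if T i = j then (1:ℝ) else 0) * Y i j) / (Nj j : ℝ) := by
  rw [pObs, Finset.sum_filter]
  congr 1
  exact Finset.sum_congr rfl fun i _ => by by_cases h : T i = j <;> simp [h]

lemma sumY {Y : Fin N → Fin J → ℝ} (hN0 : (N:ℝ) ≠ 0) (j : Fin J) :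
    ∑ i, Y i j = (N:ℝ) * Pmean Y j := by
  rw [Pmean]; field_simp

lemma sum_p_mul {Y : Fin N → Fin J → ℝ} {Nj : Fin J → ℕ} (hN : 2 ≤ N)
    (hpos : ∀ j, 1 ≤ Nj j) (j j' : Fin J) :
    (∑ T ∈ assignments N Nj, pObs Y Nj j T * pObs Y Nj j' T)
        * ((Nj j : ℝ) * (Nj j' : ℝ)) * ((N:ℝ) * ((N:ℝ) - 1))
    = ((assignments N Nj).card : ℝ) *
        ( (if j = j' then (Nj j : ℝ) * ((N:ℝ) - 1) else 0) * (∑ i, Y i j * Y i j')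
          + ((Nj j : ℝ) * (Nj j' : ℝ) - if j = j' then (Nj j : ℝ) else 0)
            * ((N:ℝ)^2 * Pmean Y j * Pmean Y j' - ∑ i, Y i j * Y i j') ) := by
  have hNj : (Nj j : ℝ) ≠ 0 := by
    have := hpos j; positivity
  have hNj' : (Nj j' : ℝ) ≠ 0 := by
    have := hpos j'; positivity
  have hN0 : (N:ℝ) ≠ 0 := by
    have : 0 < N := lt_of_lt_of_le two_pos hN
    positivity
  have expand : ∀ T : Fin N → Fin J,
      pObs Y Nj j T * pObs Y Nj j' T * ((Nj j : ℝ) * (Nj j' : ℝ))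
      = ∑ i, ∑ i', ((if T i = j then (1:ℝ) else 0) * (if T i' = j' then (1:ℝ) else 0))
          * (Y i j * Y i' j') := by
    intro T
    rw [pObs_eq, pObs_eq, div_mul_div_comm, div_mul_cancel₀ _ (mul_ne_zero hNj hNj'),
      Finset.sum_mul_sum]
    exact Finset.sum_congr rfl fun i _ => Finset.sum_congr rfl fun i' _ => by ring
  have step1 : (∑ T ∈ assignments N Nj, pObs Y Nj j T * pObs Y Nj j' T)
        * ((Nj j : ℝ) * (Nj j' : ℝ)) * ((N:ℝ) * ((N:ℝ) - 1))
      = ∑ i, ∑ i', (Y i j * Y i' j') * (((N:ℝ) * ((N:ℝ) - 1)) * ∑ T ∈ assignments N Nj,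
          ((if T i = j then (1:ℝ) else 0) * (if T i' = j' then (1:ℝ) else 0))) := by
    rw [Finset.sum_mul, Finset.sum_mul]
    rw [Finset.sum_congr rfl fun T _ => by rw [expand T]]
    simp_rw [Finset.sum_mul]
    rw [Finset.sum_comm]
    refine Finset.sum_congr rfl fun i _ => ?_
    rw [Finset.sum_comm]
    refine Finset.sum_congr rfl fun i' _ => ?_
    have hpull : ∑ T ∈ assignments N Nj,
        ((if T i = j then (1:ℝ) else 0) * (if T i' = j' then (1:ℝ) else 0)) * (Y i j * Y i' j')
        = (Y i j * Y i' j') * ∑ T ∈ assignments N Nj,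
            ((if T i = j then (1:ℝ) else 0) * (if T i' = j' then (1:ℝ) else 0)) := by
      rw [Finset.mul_sum]; exact Finset.sum_congr rfl fun T _ => by ring
    rw [← Finset.sum_mul, hpull]
    ring
  rw [step1]
  have inner : ∀ i i' : Fin N,
      ((N:ℝ) * ((N:ℝ) - 1)) * ∑ T ∈ assignments N Nj,
          ((if T i = j then (1:ℝ) else 0) * (if T i' = j' then (1:ℝ) else 0))
      = if i = i'
        then ((assignments N Nj).card : ℝ) * (if j = j' then (Nj j : ℝ) * ((N:ℝ) - 1) else 0)
        else ((assignments N Nj).card : ℝ)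
          * ((Nj j : ℝ) * (Nj j' : ℝ) - if j = j' then (Nj j : ℝ) else 0) := by
    intro i i'
    by_cases hii : i = i'
    · subst hii
      rw [if_pos rfl]
      by_cases hjj : j = j'
      · subst hjj
        rw [if_pos rfl]
        have hsimp : ∀ T ∈ assignments N Nj,
            (if T i = j then (1:ℝ) else 0) * (if T i = j then (1:ℝ) else 0)
            = (if T i = j then (1:ℝ) else 0) := fun T _ => by
          by_cases h : T i = j <;> simp [h]
        rw [Finset.sum_congr rfl hsimp]
        have h := sum_ind Nj i j
        linear_combination ((N:ℝ) - 1) * h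
      · rw [if_neg hjj]
        have hz : ∀ T ∈ assignments N Nj,
            (if T i = j then (1:ℝ) else 0) * (if T i = j' then (1:ℝ) else 0) = 0 := fun T _ => by
          by_cases h : T i = j
          · have h2 : ¬ T i = j' := fun hc => hjj (h ▸ hc ▸ rfl)
            simp [h, h2, hjj]
          · simp [h]
        rw [Finset.sum_congr rfl hz]
        simp
    · rw [if_neg hii]
      exact sum_ind_pair Nj hii j j'
  rw [Finset.sum_congr rfl fun i _ => Finset.sum_congr rfl fun i' _ => by rw [inner i i']]
  have split : ∀ i : Fin N,
      ∑ i', (Y i j * Y i' j') * (if i = i'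
          then ((assignments N Nj).card : ℝ) * (if j = j' then (Nj j : ℝ) * ((N:ℝ) - 1) else 0)
          else ((assignments N Nj).card : ℝ)
            * ((Nj j : ℝ) * (Nj j' : ℝ) - if j = j' then (Nj j : ℝ) else 0))
      = (∑ i', (Y i j * Y i' j') * (((assignments N Nj).card : ℝ)
            * ((Nj j : ℝ) * (Nj j' : ℝ) - if j = j' then (Nj j : ℝ) else 0)))
        + (Y i j * Y i j') * (((assignments N Nj).card : ℝ)
            * (if j = j' then (Nj j : ℝ) * ((N:ℝ) - 1) else 0)
          - ((assignments N Nj).card : ℝ)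
            * ((Nj j : ℝ) * (Nj j' : ℝ) - if j = j' then (Nj j : ℝ) else 0)) := by
    intro i
    have hterm : ∀ i' : Fin N, (Y i j * Y i' j') * (if i = i'
          then ((assignments N Nj).card : ℝ) * (if j = j' then (Nj j : ℝ) * ((N:ℝ) - 1) else 0)
          else ((assignments N Nj).card : ℝ)
            * ((Nj j : ℝ) * (Nj j' : ℝ) - if j = j' then (Nj j : ℝ) else 0))
        = (Y i j * Y i' j') * (((assignments N Nj).card : ℝ)
            * ((Nj j : ℝ) * (Nj j' : ℝ) - if j = j' then (Nj j : ℝ) else 0))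
          + (if i = i' then (Y i j * Y i' j') * ((((assignments N Nj).card : ℝ)
              * (if j = j' then (Nj j : ℝ) * ((N:ℝ) - 1) else 0))
            - (((assignments N Nj).card : ℝ)
              * ((Nj j : ℝ) * (Nj j' : ℝ) - if j = j' then (Nj j : ℝ) else 0))) else 0) := by
      intro i'
      by_cases h : i = i'
      · rw [if_pos h, if_pos h]; ring
      · rw [if_neg h, if_neg h]; ring
    rw [Finset.sum_congr rfl fun i' _ => hterm i', Finset.sum_add_distrib,
      Finset.sum_ite_eq, if_pos (Finset.mem_univ i)]
  rw [Finset.sum_congr rfl fun i _ => split i, Finset.sum_add_distrib]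
  have hfirst : ∑ i : Fin N, ∑ i', (Y i j * Y i' j') * (((assignments N Nj).card : ℝ)
        * ((Nj j : ℝ) * (Nj j' : ℝ) - if j = j' then (Nj j : ℝ) else 0))
      = ((N:ℝ) * Pmean Y j) * ((N:ℝ) * Pmean Y j') * (((assignments N Nj).card : ℝ)
        * ((Nj j : ℝ) * (Nj j' : ℝ) - if j = j' then (Nj j : ℝ) else 0)) := by
    simp_rw [← Finset.sum_mul]
    rw [← Finset.sum_mul_sum, sumY hN0 j, sumY hN0 j']
  have hsecond : ∑ i : Fin N, (Y i j * Y i j') * (((assignments N Nj).card : ℝ)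
        * (if j = j' then (Nj j : ℝ) * ((N:ℝ) - 1) else 0)
      - ((assignments N Nj).card : ℝ)
        * ((Nj j : ℝ) * (Nj j' : ℝ) - if j = j' then (Nj j : ℝ) else 0))
      = (∑ i, Y i j * Y i j') * (((assignments N Nj).card : ℝ)
        * (if j = j' then (Nj j : ℝ) * ((N:ℝ) - 1) else 0)
      - ((assignments N Nj).card : ℝ)
        * ((Nj j : ℝ) * (Nj j' : ℝ) - if j = j' then (Nj j : ℝ) else 0)) := by
    rw [← Finset.sum_mul]
  rw [hfirst, hsecond]
  ring

lemma expect_pp {Y : Fin N → Fin J → ℝ} {Nj : Fin J → ℕ} (hN : 2 ≤ N)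
    (hpos : ∀ j, 1 ≤ Nj j) (hsum : ∑ j, Nj j = N) (j j' : Fin J) :
    expect Nj (fun T => pObs Y Nj j T * pObs Y Nj j' T)
        * ((Nj j : ℝ) * (Nj j' : ℝ) * ((N:ℝ) * ((N:ℝ) - 1)))
    = (if j = j' then (Nj j : ℝ) * ((N:ℝ) - 1) else 0) * (∑ i, Y i j * Y i j')
      + ((Nj j : ℝ) * (Nj j' : ℝ) - if j = j' then (Nj j : ℝ) else 0)
        * ((N:ℝ)^2 * Pmean Y j * Pmean Y j' - ∑ i, Y i j * Y i j') := by
  have hM := card_ne hsum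
  have h := sum_p_mul (Y := Y) hN hpos j j'
  simp only [_root_.expect]
  rw [div_mul_eq_mul_div, div_eq_iff hM]
  linear_combination h


lemma expect_p {Y : Fin N → Fin J → ℝ} {Nj : Fin J → ℕ} (hN : 2 ≤ N)
    (hpos : ∀ j, 1 ≤ Nj j) (hsum : ∑ j, Nj j = N) (j : Fin J) :
    _root_.expect Nj (pObs Y Nj j) = Pmean Y j := by
  have hM := card_ne hsum
  have hNj : (Nj j : ℝ) ≠ 0 := by have := hpos j; positivity
  have hN0 : (N:ℝ) ≠ 0 := by
    have : 0 < N := lt_of_lt_of_le two_pos hN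
    positivity
  have h1 : ∀ T : Fin N → Fin J, pObs Y Nj j T * (Nj j : ℝ)
      = ∑ i, (if T i = j then (1:ℝ) else 0) * Y i j := fun T => by
    rw [pObs_eq, div_mul_cancel₀ _ hNj]
  have h2 : (∑ T ∈ assignments N Nj, pObs Y Nj j T) * (Nj j : ℝ) * (N:ℝ)
      = ∑ i, ((N:ℝ) * ∑ T ∈ assignments N Nj, (if T i = j then (1:ℝ) else 0)) * Y i j := by
    calc (∑ T ∈ assignments N Nj, pObs Y Nj j T) * (Nj j : ℝ) * (N:ℝ)
        = ∑ T ∈ assignments N Nj,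
            (∑ i, (if T i = j then (1:ℝ) else 0) * Y i j) * (N:ℝ) := by
          rw [Finset.sum_mul, Finset.sum_mul]
          exact Finset.sum_congr rfl fun T _ => by rw [h1 T]
      _ = ∑ i, ((N:ℝ) * ∑ T ∈ assignments N Nj, (if T i = j then (1:ℝ) else 0)) * Y i j := by
          simp_rw [Finset.sum_mul]
          rw [Finset.sum_comm]
          refine Finset.sum_congr rfl fun i _ => ?_
          rw [Finset.mul_sum, Finset.sum_mul]
          exact Finset.sum_congr rfl fun T _ => by ring
  have h3 : (∑ T ∈ assignments N Nj, pObs Y Nj j T) * (Nj j : ℝ) * (N:ℝ)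
      = ((assignments N Nj).card : ℝ) * (Nj j : ℝ) * ((N:ℝ) * Pmean Y j) := by
    rw [h2, Finset.sum_congr rfl fun i _ => by rw [sum_ind Nj i j],
      ← Finset.mul_sum, sumY hN0 j]
  have h4 : (∑ T ∈ assignments N Nj, pObs Y Nj j T) = ((assignments N Nj).card : ℝ) * Pmean Y j := by
    apply mul_right_cancel₀ (mul_ne_zero hNj hN0)
    linear_combination h3
  simp only [_root_.expect]
  rw [h4, mul_comm, mul_div_assoc, div_self hM, mul_one]

lemma expect_fsum {Nj : Fin J → ℕ} {ι : Type*} (s : Finset ι)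
    (f : ι → (Fin N → Fin J) → ℝ) :
    _root_.expect Nj (fun T => ∑ x ∈ s, f x T) = ∑ x ∈ s, _root_.expect Nj (f x) := by
  simp only [_root_.expect]
  rw [Finset.sum_comm, Finset.sum_div]

lemma expect_smul {Nj : Fin J → ℕ} (a : ℝ) (f : (Fin N → Fin J) → ℝ) :
    _root_.expect Nj (fun T => a * f T) = a * _root_.expect Nj f := by
  simp only [_root_.expect]
  rw [← Finset.mul_sum, mul_div_assoc]

lemma rcov_eq {Nj : Fin J → ℕ} (hsum : ∑ j, Nj j = N) (f g : (Fin N → Fin J) → ℝ) :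
    rcov Nj f g = _root_.expect Nj (fun T => f T * g T)
      - _root_.expect Nj f * _root_.expect Nj g := by
  have hM := card_ne hsum
  simp only [rcov]
  set Ef := _root_.expect Nj f with hEf
  set Eg := _root_.expect Nj g with hEg
  have hf : ∑ T ∈ assignments N Nj, f T = Ef * ((assignments N Nj).card : ℝ) := by
    rw [hEf]; simp only [_root_.expect]; field_simp
  have hg : ∑ T ∈ assignments N Nj, g T = Eg * ((assignments N Nj).card : ℝ) := by
    rw [hEg]; simp only [_root_.expect]; field_simp
  simp only [_root_.expect]
  have expand : ∑ T ∈ assignments N Nj, (f T - Ef) * (g T - Eg)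
      = (∑ T ∈ assignments N Nj, f T * g T) - Ef * (∑ T ∈ assignments N Nj, g T)
        - Eg * (∑ T ∈ assignments N Nj, f T)
        + ((assignments N Nj).card : ℝ) * (Ef * Eg) := by
    have hterm : ∀ T ∈ assignments N Nj, (f T - Ef) * (g T - Eg)
        = f T * g T - Ef * g T - Eg * f T + Ef * Eg := fun T _ => by ring
    rw [Finset.sum_congr rfl hterm, Finset.sum_add_distrib, Finset.sum_sub_distrib,
      Finset.sum_sub_distrib, ← Finset.mul_sum, ← Finset.mul_sum, Finset.sum_const,
      nsmul_eq_mul]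
  rw [expand, hf, hg]
  field_simp
  ring

lemma rvar_eq_rcov {Nj : Fin J → ℕ} (f : (Fin N → Fin J) → ℝ) :
    rvar Nj f = rcov Nj f f := by
  simp only [rvar, rcov]
  congr 1
  funext T
  ring

lemma SS_eq {Y : Fin N → Fin J → ℝ} (hN0 : (N:ℝ) ≠ 0) (j : Fin J) :
    ∑ i, (Y i j - Pmean Y j)^2
      = (∑ i, Y i j * Y i j) - (N:ℝ) * (Pmean Y j)^2 := by
  have hs : ∀ i ∈ (Finset.univ : Finset (Fin N)), (Y i j - Pmean Y j)^2
      = Y i j * Y i j - (2 * Pmean Y j) * Y i j + (Pmean Y j)^2 := fun i _ => by ring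
  rw [Finset.sum_congr rfl hs, Finset.sum_add_distrib, Finset.sum_sub_distrib,
    ← Finset.mul_sum, sumY hN0 j, Finset.sum_const, Finset.card_univ, Fintype.card_fin,
    nsmul_eq_mul]
  ring

lemma SSdiff_eq {Y : Fin N → Fin J → ℝ} (hN0 : (N:ℝ) ≠ 0) (j j' : Fin J) :
    ∑ i, (Y i j - Y i j' - (Pmean Y j - Pmean Y j'))^2
      = (∑ i, Y i j * Y i j) + (∑ i, Y i j' * Y i j') - 2 * (∑ i, Y i j * Y i j')
        - (N:ℝ) * (Pmean Y j - Pmean Y j')^2 := by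
  have hs : ∀ i ∈ (Finset.univ : Finset (Fin N)),
      (Y i j - Y i j' - (Pmean Y j - Pmean Y j'))^2
      = (Y i j * Y i j + Y i j' * Y i j' - (2:ℝ) * (Y i j * Y i j'))
        - ((2 * (Pmean Y j - Pmean Y j')) * Y i j - (2 * (Pmean Y j - Pmean Y j')) * Y i j')
        + (Pmean Y j - Pmean Y j')^2 := fun i _ => by ring
  rw [Finset.sum_congr rfl hs, Finset.sum_add_distrib, Finset.sum_sub_distrib,
    Finset.sum_sub_distrib, Finset.sum_add_distrib, Finset.sum_sub_distrib,
    ← Finset.mul_sum, ← Finset.mul_sum, ← Finset.mul_sum, sumY hN0 j, sumY hN0 j',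
    Finset.sum_const, Finset.card_univ, Fintype.card_fin, nsmul_eq_mul]
  ring

lemma S2diff_comm {Y : Fin N → Fin J → ℝ} (j j' : Fin J) :
    S2diff Y j j' = S2diff Y j' j := by
  simp only [S2diff]
  congr 1
  exact Finset.sum_congr rfl fun i _ => by ring

lemma rcov_pp_same {Y : Fin N → Fin J → ℝ} {Nj : Fin J → ℕ} (hN : 2 ≤ N)
    (hpos : ∀ j, 1 ≤ Nj j) (hsum : ∑ j, Nj j = N) (j : Fin J) :
    rcov Nj (pObs Y Nj j) (pObs Y Nj j)
      = (((N:ℝ) - (Nj j : ℝ)) / (N:ℝ)) * (S2 Y j / (Nj j : ℝ)) := by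
  have hNj : (Nj j : ℝ) ≠ 0 := by have := hpos j; positivity
  have hN0 : (N:ℝ) ≠ 0 := by
    have : 0 < N := lt_of_lt_of_le two_pos hN
    positivity
  have hN2 : (2:ℝ) ≤ (N:ℝ) := by exact_mod_cast hN
  have hN1 : (N:ℝ) - 1 ≠ 0 := by linarith
  have hpp := expect_pp (Y := Y) hN hpos hsum j j
  rw [if_pos rfl, if_pos rfl] at hpp
  have hE : _root_.expect Nj (fun T => pObs Y Nj j T * pObs Y Nj j T)
      = ((Nj j : ℝ) * ((N:ℝ) - 1) * (∑ i, Y i j * Y i j)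
          + ((Nj j : ℝ) * (Nj j : ℝ) - (Nj j : ℝ))
            * ((N:ℝ)^2 * Pmean Y j * Pmean Y j - ∑ i, Y i j * Y i j))
        / ((Nj j : ℝ) * (Nj j : ℝ) * ((N:ℝ) * ((N:ℝ) - 1))) := by
    rw [eq_div_iff (by exact mul_ne_zero (mul_ne_zero hNj hNj) (mul_ne_zero hN0 hN1))]
    linear_combination hpp
  rw [rcov_eq hsum, expect_p hN hpos hsum j, hE, S2, SS_eq hN0 j]
  field_simp
  ring

lemma rcov_pp_ne {Y : Fin N → Fin J → ℝ} {Nj : Fin J → ℕ} (hN : 2 ≤ N)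
    (hpos : ∀ j, 1 ≤ Nj j) (hsum : ∑ j, Nj j = N) {j j' : Fin J} (hjj : j ≠ j') :
    rcov Nj (pObs Y Nj j) (pObs Y Nj j')
      = -(1 / (2 * (N:ℝ))) * (S2 Y j + S2 Y j' - S2diff Y j j') := by
  have hNj : (Nj j : ℝ) ≠ 0 := by have := hpos j; positivity
  have hNj' : (Nj j' : ℝ) ≠ 0 := by have := hpos j'; positivity
  have hN0 : (N:ℝ) ≠ 0 := by
    have : 0 < N := lt_of_lt_of_le two_pos hN
    positivity
  have hN2 : (2:ℝ) ≤ (N:ℝ) := by exact_mod_cast hN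
  have hN1 : (N:ℝ) - 1 ≠ 0 := by linarith
  have hpp := expect_pp (Y := Y) hN hpos hsum j j'
  rw [if_neg hjj, if_neg hjj] at hpp
  have hE : _root_.expect Nj (fun T => pObs Y Nj j T * pObs Y Nj j' T)
      = (((Nj j : ℝ) * (Nj j' : ℝ))
            * ((N:ℝ)^2 * Pmean Y j * Pmean Y j' - ∑ i, Y i j * Y i j'))
        / ((Nj j : ℝ) * (Nj j' : ℝ) * ((N:ℝ) * ((N:ℝ) - 1))) := by
    rw [eq_div_iff (by exact mul_ne_zero (mul_ne_zero hNj hNj') (mul_ne_zero hN0 hN1))]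
    linear_combination hpp
  rw [rcov_eq hsum, expect_p hN hpos hsum j, expect_p hN hpos hsum j', hE, S2, S2, S2diff,
    SS_eq hN0 j, SS_eq hN0 j', SSdiff_eq hN0 j j']
  field_simp
  ring

end Aux




/-- Under a completely randomized assignment, the variance of a linear combination
`Σ_j c_j p_j` equals
`Σ_j c_j² ((N-N_j)/N)(S_j²/N_j) - (1/N) Σ_{j<j'} c_j c_{j'} (S_j² + S_{j'}² - S²_{j-j'})`. -/
theorem rvar_linear_combination {N J : ℕ} (hN : 2 ≤ N)
    (Y : Fin N → Fin J → ℝ) (Nj : Fin J → ℕ)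
    (hpos : ∀ j, 1 ≤ Nj j) (hsum : ∑ j, Nj j = N) (c : Fin J → ℝ) :
    rvar Nj (fun T => ∑ j, c j * pObs Y Nj j T) =
      (∑ j, (c j) ^ 2 * (((N : ℝ) - (Nj j : ℝ)) / (N : ℝ)) * (S2 Y j / (Nj j : ℝ)))
        - (1 / (N : ℝ)) * ∑ j, ∑ j' ∈ Finset.univ.filter (fun j' => j < j'),
            c j * c j' * (S2 Y j + S2 Y j' - S2diff Y j j') := by
  have hvar : rvar Nj (fun T => ∑ j, c j * pObs Y Nj j T)
      = ∑ j, ∑ j', (c j * c j') * rcov Nj (pObs Y Nj j) (pObs Y Nj j') := by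
    rw [rvar_eq_rcov, rcov_eq hsum]
    have e1 : (fun T => (∑ j, c j * pObs Y Nj j T) * (∑ j, c j * pObs Y Nj j T))
        = fun T => ∑ j, ∑ j', ((c j * c j') * (pObs Y Nj j T * pObs Y Nj j' T)) := by
      funext T
      rw [Finset.sum_mul_sum]
      exact Finset.sum_congr rfl fun j _ => Finset.sum_congr rfl fun j' _ => by ring
    rw [e1, expect_fsum]
    have e2 : ∀ j : Fin J, _root_.expect Nj (fun T => ∑ j', (c j * c j')
          * (pObs Y Nj j T * pObs Y Nj j' T))
        = ∑ j', (c j * c j') * _root_.expect Nj (fun T => pObs Y Nj j T * pObs Y Nj j' T) := by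
      intro j
      rw [expect_fsum]
      exact Finset.sum_congr rfl fun j' _ => expect_smul _ _
    rw [Finset.sum_congr rfl fun j _ => e2 j]
    have e3 : _root_.expect Nj (fun T => ∑ j, c j * pObs Y Nj j T)
        = ∑ j, c j * Pmean Y j := by
      rw [expect_fsum]
      exact Finset.sum_congr rfl fun j _ => by rw [expect_smul, expect_p hN hpos hsum j]
    rw [e3, Finset.sum_mul_sum, ← Finset.sum_sub_distrib]
    refine Finset.sum_congr rfl fun j _ => ?_
    rw [← Finset.sum_sub_distrib]
    refine Finset.sum_congr rfl fun j' _ => ?_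
    rw [rcov_eq hsum, expect_p hN hpos hsum j, expect_p hN hpos hsum j']
    ring
  rw [hvar]
  have hsplitJ : ∀ j : Fin J, (Finset.univ : Finset (Fin J)).erase j
      = (Finset.univ.filter fun j' => j < j') ∪ (Finset.univ.filter fun j' => j' < j) := by
    intro j
    ext x
    simp only [Finset.mem_erase, Finset.mem_union, Finset.mem_filter, Finset.mem_univ,
      true_and, and_true]
    constructor
    · intro h; exact h.lt_or_gt.symm.imp id id |>.symm.imp id id |>.elim (fun h => Or.inr h) (fun h => Or.inl h)
    · rintro (h | h) <;> [exact ne_of_gt h; exact ne_of_lt h]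
  have hdisj : ∀ j : Fin J, Disjoint (Finset.univ.filter fun j' => j < j')
      (Finset.univ.filter fun j' => j' < j) := by
    intro j
    rw [Finset.disjoint_left]
    intro a ha hb
    simp only [Finset.mem_filter] at ha hb
    exact absurd hb.2 (lt_asymm ha.2)
  have hinner : ∀ j : Fin J, ∑ j', (c j * c j') * rcov Nj (pObs Y Nj j) (pObs Y Nj j')
      = (c j * c j) * rcov Nj (pObs Y Nj j) (pObs Y Nj j)
        + ((∑ j' ∈ Finset.univ.filter fun j' => j < j',
              (c j * c j') * rcov Nj (pObs Y Nj j) (pObs Y Nj j'))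
          + (∑ j' ∈ Finset.univ.filter fun j' => j' < j,
              (c j * c j') * rcov Nj (pObs Y Nj j) (pObs Y Nj j'))) := by
    intro j
    rw [← Finset.add_sum_erase _ _ (Finset.mem_univ j), hsplitJ j,
      Finset.sum_union (hdisj j)]
  rw [Finset.sum_congr rfl fun j _ => hinner j, Finset.sum_add_distrib,
    Finset.sum_add_distrib]
  have hexch : ∑ j, ∑ j' ∈ Finset.univ.filter (fun j' => j' < j),
        (c j * c j') * rcov Nj (pObs Y Nj j) (pObs Y Nj j')
      = ∑ j, ∑ j' ∈ Finset.univ.filter (fun j' => j < j'),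
        (c j' * c j) * rcov Nj (pObs Y Nj j') (pObs Y Nj j) := by
    simp only [Finset.sum_filter]
    exact Finset.sum_comm
  rw [hexch]
  have hdiag : ∑ j, (c j * c j) * rcov Nj (pObs Y Nj j) (pObs Y Nj j)
      = ∑ j, (c j) ^ 2 * (((N : ℝ) - (Nj j : ℝ)) / (N : ℝ)) * (S2 Y j / (Nj j : ℝ)) := by
    refine Finset.sum_congr rfl fun j _ => ?_
    rw [rcov_pp_same hN hpos hsum j]
    ring
  have hoff : (∑ j, ∑ j' ∈ Finset.univ.filter (fun j' => j < j'),
        (c j * c j') * rcov Nj (pObs Y Nj j) (pObs Y Nj j'))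
      + (∑ j, ∑ j' ∈ Finset.univ.filter (fun j' => j < j'),
        (c j' * c j) * rcov Nj (pObs Y Nj j') (pObs Y Nj j))
      = -(1 / (N : ℝ) * ∑ j, ∑ j' ∈ Finset.univ.filter (fun j' => j < j'),
          c j * c j' * (S2 Y j + S2 Y j' - S2diff Y j j')) := by
    rw [← Finset.sum_add_distrib]
    have hpair : ∀ j : Fin J, ∀ j' ∈ Finset.univ.filter (fun j' => j < j'),
        (c j * c j') * rcov Nj (pObs Y Nj j) (pObs Y Nj j')
          + (c j' * c j) * rcov Nj (pObs Y Nj j') (pObs Y Nj j)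
        = -(1 / (N : ℝ) * (c j * c j' * (S2 Y j + S2 Y j' - S2diff Y j j'))) := by
      intro j j' hj'
      have hlt : j < j' := (Finset.mem_filter.mp hj').2
      have hjj : j ≠ j' := ne_of_lt hlt
      rw [rcov_pp_ne hN hpos hsum hjj, rcov_pp_ne hN hpos hsum hjj.symm,
        S2diff_comm j' j]
      have hN0 : (N:ℝ) ≠ 0 := by
        have : 0 < N := lt_of_lt_of_le two_pos hN
        positivity
      field_simp
      ring
    rw [Finset.sum_congr rfl fun j _ => Finset.sum_add_distrib.symm]
    rw [Finset.sum_congr rfl fun j _ => Finset.sum_congr rfl (hpair j)]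
    rw [Finset.mul_sum]
    rw [← Finset.sum_neg_distrib]
    refine Finset.sum_congr rfl fun j _ => ?_
    rw [Finset.mul_sum, ← Finset.sum_neg_distrib]
  rw [hdiag, hoff, ← sub_eq_add_neg]
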